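/- Let β_1, ..., β_n ∈ ℝ^r be vectors. If there exists a nonzero x ∈ ℝ^r such that ⟨β_i, x⟩ ≥ √((r-1)/r) · ‖β_i‖ · ‖x‖ for all i, then there exists an orthogonal matrix Q ∈ ℝ^{r×r} such that Q β_i has all entries nonnegative for every i. -/

import Mathlib

open Matrix BigOperators

lemma cs_aux {ι : Type*} (s : Finset ι) (v : ι → ℝ) :
    ∑ k ∈ s, v k ≤ Real.sqrt s.card * Real.sqrt (∑ k ∈ s, v k ^ 2) := by
  rcases le_or_gt (∑ k ∈ s, v k) 0 with h | h
  · exact h.trans (by positivity)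
  · rw [← Real.sqrt_mul (by positivity)]
    have h2 := sq_sum_le_card_mul_sum_sq (s := s) (f := v)
    rw [Real.le_sqrt h.le]
    · exact_mod_cast h2
    · positivity

lemma key_lemma (r : ℕ) (v : Fin r → ℝ)
    (h : Real.sqrt ((r : ℝ) - 1) * Real.sqrt (∑ j, v j ^ 2) ≤ ∑ j, v j)
    (j : Fin r) : 0 ≤ v j := by
  by_contra hneg
  push_neg at hneg
  set s := Finset.univ.erase j with hs
  have hsum : ∑ k, v k = v j + ∑ k ∈ s, v k := by
    rw [hs, Finset.add_sum_erase _ _ (Finset.mem_univ j)]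
  have hcard : (s.card : ℝ) = (r : ℝ) - 1 := by
    rw [hs, Finset.card_erase_of_mem (Finset.mem_univ j)]
    have : 1 ≤ r := Fin.pos j
    simp [Nat.cast_sub this]
  have h1 : ∑ k ∈ s, v k ≤ Real.sqrt ((r:ℝ)-1) * Real.sqrt (∑ k, v k ^ 2) := by
    calc ∑ k ∈ s, v k ≤ Real.sqrt s.card * Real.sqrt (∑ k ∈ s, v k ^ 2) := cs_aux s v
    _ ≤ Real.sqrt ((r:ℝ)-1) * Real.sqrt (∑ k, v k ^ 2) := by
        rw [hcard]
        apply mul_le_mul_of_nonneg_left _ (Real.sqrt_nonneg _)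
        apply Real.sqrt_le_sqrt
        exact Finset.sum_le_sum_of_subset_of_nonneg (Finset.subset_univ s)
          (fun k _ _ => by positivity)
  linarith

noncomputable def HH (r : ℕ) (w : Fin r → ℝ) : Matrix (Fin r) (Fin r) ℝ :=
  fun i j => (if i = j then (1:ℝ) else 0) - 2 * w i * w j / (∑ k, w k ^ 2)

lemma HH_orth (r : ℕ) (w : Fin r → ℝ) (hW : (∑ k, w k ^ 2) ≠ 0) :
    (HH r w)ᵀ * HH r w = 1 := by
  ext i j
  simp only [Matrix.mul_apply, Matrix.transpose_apply, HH, Matrix.one_apply]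
  set W := ∑ k, w k ^ 2 with hWdef
  have expand : ∀ k, ((if k = i then (1:ℝ) else 0) - 2 * w k * w i / W) *
      ((if k = j then (1:ℝ) else 0) - 2 * w k * w j / W)
      = (if k = i then (1:ℝ) else 0) * (if k = j then (1:ℝ) else 0)
        - (if k = i then (1:ℝ) else 0) * (2 * w k * w j / W)
        - (if k = j then (1:ℝ) else 0) * (2 * w k * w i / W)
        + (4 * w i * w j / W^2) * w k ^ 2 := by
    intro k; ring
  rw [Finset.sum_congr rfl (fun k _ => expand k)]
  rw [Finset.sum_add_distrib, Finset.sum_sub_distrib, Finset.sum_sub_distrib,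
    ← Finset.mul_sum, ← hWdef]
  simp only [ite_mul, one_mul, zero_mul, Finset.sum_ite_eq, Finset.sum_ite_eq', Finset.mem_univ, if_true]
  rcases eq_or_ne i j with rfl | hij
  · simp only [if_pos rfl]
    field_simp
    ring
  · simp only [if_neg hij, if_neg (Ne.symm hij)]
    field_simp
    ring

lemma HH_mulVec (r : ℕ) (w v : Fin r → ℝ) (j : Fin r) :
    (HH r w).mulVec v j = v j - 2 * w j * (∑ k, w k * v k) / (∑ k, w k ^ 2) := by
  simp only [Matrix.mulVec, dotProduct, HH]
  have expand : ∀ k, ((if j = k then (1:ℝ) else 0) - 2 * w j * w k / (∑ k, w k ^ 2)) * v k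
      = (if j = k then (1:ℝ) else 0) * v k
        - (2 * w j / (∑ k, w k ^ 2)) * (w k * v k) := by
    intro k; ring
  rw [Finset.sum_congr rfl (fun k _ => expand k)]
  rw [Finset.sum_sub_distrib, ← Finset.mul_sum]
  simp only [ite_mul, one_mul, zero_mul, Finset.sum_ite_eq, Finset.mem_univ, if_true]
  ring

lemma orth_dot {r : ℕ} (Q : Matrix (Fin r) (Fin r) ℝ) (hQ : Qᵀ * Q = 1)
    (a b : Fin r → ℝ) : Q.mulVec a ⬝ᵥ Q.mulVec b = a ⬝ᵥ b := by
  rw [Matrix.dotProduct_mulVec, ← Matrix.mulVec_transpose, Matrix.mulVec_mulVec, hQ,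
    Matrix.one_mulVec]

theorem stmt_3 (r n : ℕ) (β : Fin n → Fin r → ℝ) (x : Fin r → ℝ) (hx : x ≠ 0)
    (h : ∀ i, Real.sqrt (((r : ℝ) - 1) / r) * Real.sqrt (∑ j, β i j ^ 2) *
      Real.sqrt (∑ j, x j ^ 2) ≤ ∑ j, β i j * x j) :
    ∃ Q : Matrix (Fin r) (Fin r) ℝ, Qᵀ * Q = 1 ∧ ∀ i j, 0 ≤ Q.mulVec (β i) j := by
  obtain ⟨j0, hj0⟩ := Function.ne_iff.mp hx
  have hr : 0 < r := j0.pos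
  have hr1 : (1:ℝ) ≤ r := by exact_mod_cast hr
  set N2 := ∑ j, x j ^ 2 with hN2def
  have hN2 : 0 < N2 := by
    apply Finset.sum_pos' (fun k _ => by positivity)
    exact ⟨j0, Finset.mem_univ j0, sq_pos_of_ne_zero hj0⟩
  set N := Real.sqrt N2 with hNdef
  have hN : 0 < N := Real.sqrt_pos.mpr hN2
  have hNsq : N ^ 2 = N2 := Real.sq_sqrt hN2.le
  set c := (Real.sqrt r)⁻¹ with hcdef
  have hc : 0 < c := by positivity
  have hc2 : c ^ 2 * r = 1 := by
    rw [hcdef, inv_pow, Real.sq_sqrt (by positivity : (0:ℝ) ≤ r)]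
    field_simp
  -- the square root factor
  have hsqrt : Real.sqrt (((r : ℝ) - 1) / r) = Real.sqrt ((r:ℝ) - 1) * c := by
    rw [Real.sqrt_div (by linarith : (0:ℝ) ≤ (r:ℝ) - 1), hcdef, div_eq_mul_inv]
  -- obtain an orthogonal Q mapping x to the constant vector N*c
  obtain ⟨Q, hQ, hQx⟩ : ∃ Q : Matrix (Fin r) (Fin r) ℝ,
      Qᵀ * Q = 1 ∧ Q.mulVec x = fun _ => N * c := by
    set w : Fin r → ℝ := fun j => x j / N - c with hwdef
    set T := ∑ j, x j with hTdef
    have hwx : ∑ k, w k * x k = N - c * T := by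
      have : ∀ k, w k * x k = x k ^ 2 * N⁻¹ - c * x k := by
        intro k; rw [hwdef]; field_simp
      rw [Finset.sum_congr rfl (fun k _ => this k), Finset.sum_sub_distrib,
        ← Finset.sum_mul, ← Finset.mul_sum, ← hN2def, ← hTdef]
      rw [show N2 = N * N by rw [← hNsq]; ring]
      field_simp
    have hW : ∑ k, w k ^ 2 = 2 - 2 * c * T / N := by
      have : ∀ k, w k ^ 2 = x k ^ 2 * (N2)⁻¹ - (2 * c / N) * x k + c ^ 2 := by
        intro k
        rw [hwdef, ← hNsq]
        field_simp
        ring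
      rw [Finset.sum_congr rfl (fun k _ => this k), Finset.sum_add_distrib,
        Finset.sum_sub_distrib, ← Finset.sum_mul, ← Finset.mul_sum, ← hN2def, ← hTdef,
        Finset.sum_const, Finset.card_univ, Fintype.card_fin, nsmul_eq_mul, mul_comm (r:ℝ) _,
        hc2]
      field_simp
      ring
    rcases eq_or_ne (∑ k, w k ^ 2) 0 with hWz | hWnz
    · -- x is already the constant vector
      have hxconst : ∀ j, x j = N * c := by
        intro j
        have hw0 : w j = 0 := by
          have := (Finset.sum_eq_zero_iff_of_nonneg (fun k _ => by positivity)).mp hWz j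
            (Finset.mem_univ j)
          exact pow_eq_zero_iff (n := 2) (by norm_num) |>.mp this
        rw [hwdef] at hw0
        field_simp at hw0
        linarith [hw0]
      exact ⟨1, by simp, by funext j; rw [Matrix.one_mulVec]; exact hxconst j⟩
    · refine ⟨HH r w, HH_orth r w hWnz, ?_⟩
      funext j
      rw [HH_mulVec, hwx]
      have h2 : 2 * w j * (N - c * T) / (∑ k, w k ^ 2) = w j * N := by
        rw [div_eq_iff hWnz, hW]
        field_simp
      rw [h2, hwdef]
      field_simp
      ring
  -- conclude
  refine ⟨Q, hQ, fun i j => ?_⟩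
  apply key_lemma
  set v := Q.mulVec (β i) with hvdef
  have hnorm : ∑ k, v k ^ 2 = ∑ k, β i k ^ 2 := by
    have := orth_dot Q hQ (β i) (β i)
    simpa [dotProduct, pow_two] using this
  have hdot : (∑ k, v k) * (N * c) = ∑ k, β i k * x k := by
    have := orth_dot Q hQ (β i) x
    rw [hQx] at this
    simpa [dotProduct, Finset.sum_mul] using this
  have hi := h i
  rw [hsqrt] at hi
  rw [hnorm]
  have hNc : 0 < N * c := by positivity
  rw [← mul_le_mul_iff_of_pos_right hNc]
  calc Real.sqrt ((r:ℝ) - 1) * Real.sqrt (∑ k, β i k ^ 2) * (N * c)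
      = Real.sqrt ((r:ℝ) - 1) * c * Real.sqrt (∑ k, β i k ^ 2) * N := by ring
    _ ≤ ∑ k, β i k * x k := hi
    _ = (∑ k, v k) * (N * c) := hdot.symm
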